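/- If (x₁,…,xₙ) and (y₁,…,yₘ) are snakes, then the sequence (2, x₁+1, x₂+1, …, xₙ+1, y₁, y₂, …, yₘ) is a snake. -/

import Mathlib

/-- A finite sequence of naturals is a snake. -/
def Snake (x : List ℕ) : Prop :=
  x = [0] ∨
    (x ≠ [] ∧ x.head? = some 2 ∧ x.getLast? = some 0 ∧
      (∀ i, i + 1 < x.length → 0 < x[i]!) ∧
      (∀ i, i + 1 < x.length → x[i + 1]! = x[i]! + 1 ∨ x[i]! = x[i + 1]! + 1))

def oplus (x y : List ℕ) : List ℕ := 2 :: (x.map (· + 1) ++ y)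

lemma snake_facts (x : List ℕ) (hx : Snake x) :
    x ≠ [] ∧ x[x.length - 1]! = 0 ∧ (x[0]! = 0 ∨ x[0]! = 2) ∧
    (∀ i, i + 1 < x.length → 0 < x[i]!) ∧
    (∀ i, i + 1 < x.length → x[i + 1]! = x[i]! + 1 ∨ x[i]! = x[i + 1]! + 1) := by
  rcases hx with h | ⟨hne, hhead, hlast, hpos, hstep⟩
  · subst h
    refine ⟨by simp, by simp, Or.inl (by simp), ?_, ?_⟩ <;>
      intro i hi <;> simp at hi
  · have hlen : 0 < x.length := List.length_pos_iff.mpr hne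
    have h0 : x[0]! = 2 := by
      rw [getElem!_pos x 0 hlen]
      have : x.head? = x[0]? := List.head?_eq_getElem?
      rw [hhead, List.getElem?_eq_getElem hlen] at this
      exact (Option.some.inj this).symm
    have hl : x[x.length - 1]! = 0 := by
      have hlt : x.length - 1 < x.length := by omega
      rw [getElem!_pos x _ hlt]
      have : x.getLast? = x[x.length - 1]? := List.getLast?_eq_getElem?
      rw [hlast, List.getElem?_eq_getElem hlt] at this
      exact (Option.some.inj this).symm
    exact ⟨hne, hl, Or.inr h0, hpos, hstep⟩

theorem oplus_snake (x y : List ℕ) (hx : Snake x) (hy : Snake y) :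
    Snake (oplus x y) := by
  obtain ⟨hxne, hxlast, hxhead, hxpos, hxstep⟩ := snake_facts x hx
  obtain ⟨hyne, hylast, hyhead, hypos, hystep⟩ := snake_facts y hy
  set n := x.length with hn
  set m := y.length with hm
  have hn0 : 0 < n := List.length_pos_iff.mpr hxne
  have hm0 : 0 < m := List.length_pos_iff.mpr hyne
  have hLlen : (oplus x y).length = n + m + 1 := by simp [oplus]; rfl
  have hL0 : (oplus x y)[0]! = 2 := by
    rw [getElem!_pos _ 0 (by omega)]; rfl
  have hLx : ∀ i, i < n → (oplus x y)[i + 1]! = x[i]! + 1 := by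
    intro i hi
    rw [getElem!_pos _ (i + 1) (by omega), getElem!_pos x i hi]
    show (x.map (· + 1) ++ y)[i]'(by simp; omega) = _
    rw [List.getElem_append_left (by simpa), List.getElem_map]
  have hLy : ∀ j, j < m → (oplus x y)[n + j + 1]! = y[j]! := by
    intro j hj
    rw [getElem!_pos _ (n + j + 1) (by omega), getElem!_pos y j hj]
    show (x.map (· + 1) ++ y)[n + j]'(by simp; omega) = _
    rw [List.getElem_append_right (by simp; omega)]
    congr 1
    simp
    omega
  refine Or.inr ⟨by simp [oplus], rfl, ?_, ?_, ?_⟩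
  · show ((2 :: x.map (· + 1)) ++ y).getLast? = some 0
    rw [List.getLast?_append]
    have : y.getLast? = some 0 := by
      rw [List.getLast?_eq_getElem?, List.getElem?_eq_getElem (by omega : m - 1 < m),
        ← getElem!_pos y _ (by omega : m - 1 < m), hylast]
    rw [this]; rfl
  · intro i hi
    rw [hLlen] at hi
    match i with
    | 0 => rw [hL0]; omega
    | k + 1 =>
      by_cases hk : k < n
      · rw [hLx k hk]; omega
      · have hj : (k - n) + 1 < m := by omega
        have : k + 1 = n + (k - n) + 1 := by omega
        rw [this, hLy _ (by omega)]
        exact hypos _ hj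
  · intro i hi
    rw [hLlen] at hi
    match i with
    | 0 =>
      rw [hL0, hLx 0 hn0]
      omega
    | k + 1 =>
      by_cases hk : k + 1 < n
      · rw [hLx k (by omega), hLx (k + 1) hk]
        rcases hxstep k hk with h | h <;> omega
      · by_cases hk2 : k + 1 = n
        · have h1 : (oplus x y)[k + 1]! = 1 := by
            rw [hLx k (by omega)]
            have : k = n - 1 := by omega
            rw [this, hxlast]
          have h2 : k + 1 + 1 = n + 0 + 1 := by omega
          rw [h1, h2, hLy 0 hm0]
          omega
        · have hj : (k - n) + 1 + 1 < m + 1 := by omega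
          have e1 : k + 1 = n + (k - n) + 1 := by omega
          have e2 : k + 1 + 1 = n + (k - n + 1) + 1 := by omega
          rw [e2, e1, hLy _ (by omega), hLy _ (by omega)]
          exact hystep _ (by omega)
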